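/- Let L be a left ideal of the n-th Weyl algebra W and let ≼ be a normal ordering of W. Then L admits a Gröbner basis with respect to ≼, i.e. there exists a finite subset B ⊆ L with L = Σ_{b∈B} Wb and LT_≼(L) = ⟨LT_≼(b) : b ∈ B, b ≠ 0⟩. -/

import Mathlib

/-- A total ordering on `S`: an antisymmetric, transitive and total binary relation. -/
def IsTotalOrdering {S : Type*} (r : S → S → Prop) : Prop :=
  (∀ a b, r a b → r b a → a = b) ∧ (∀ a b c, r a b → r b c → r a c) ∧ (∀ a b, r a b ∨ r b a)

/-- `TO S` is the set of all total orderings on `S`. -/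
def TO (S : Type*) : Type _ := {r : S → S → Prop // IsTotalOrdering r}

/-- The underlying relation of a total ordering. -/
def TO.rel {S : Type*} (r : TO S) : S → S → Prop := Subtype.val r

/-- The subbasic open set `𝔘_{(a,b)} = {≼ ∈ TO(S) : a ≼ b}`. -/
def USet {S : Type*} (a b : S) : Set (TO S) := {r | r.rel a b}

/-- The topology `𝒰` on `TO S`: the coarsest topology for which all `𝔘_{(a,b)}` are open. -/
instance TOTop (S : Type*) : TopologicalSpace (TO S) :=
  TopologicalSpace.generateFrom {U | ∃ a b, U = USet a b}


open MvPolynomial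

section Weyl

variable {K : Type*} [Field K] {n : ℕ} {W : Type*} [Ring W] [Algebra K W]

/-- The normal monomial `ξ^λ ∂^μ` of the Weyl algebra, for generators `ξ i` and `∂ i`. -/
def nm (ξ dd : Fin n → W) (lam mu : Fin n → ℕ) : W :=
  (List.ofFn fun i => ξ i ^ lam i).prod * (List.ofFn fun i => dd i ^ mu i).prod

/-- The set `N` of normal monomials `ξ^λ ∂^μ` of the Weyl algebra. -/
def NormalMonomials (ξ dd : Fin n → W) : Set W := {w | ∃ lam mu, w = nm ξ dd lam mu}

/-- The normal monomial `ξ^λ ∂^μ` as an element of `N`. -/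
def nmEl (ξ dd : Fin n → W) (lam mu : Fin n → ℕ) : ↥(NormalMonomials ξ dd) :=
  ⟨nm ξ dd lam mu, lam, mu, rfl⟩

/-- A normal ordering of the Weyl algebra: a total ordering `≼` on `N` such that
`1 = ξ^0∂^0 ≼ ξ^λ∂^μ` for all `λ, μ`, and which is compatible with the addition of
exponents. -/
def IsNormalOrdering (ξ dd : Fin n → W) (r : TO ↥(NormalMonomials ξ dd)) : Prop :=
  (∀ lam mu, r.rel (nmEl ξ dd 0 0) (nmEl ξ dd lam mu)) ∧
  ∀ lam mu rho sig al be : Fin n → ℕ,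
    r.rel (nmEl ξ dd lam mu) (nmEl ξ dd rho sig) →
      r.rel (nmEl ξ dd (lam + al) (mu + be)) (nmEl ξ dd (rho + al) (sig + be))

/-- The set `NO(N)` of all normal orderings. -/
def NOSet (ξ dd : Fin n → W) : Set (TO ↥(NormalMonomials ξ dd)) :=
  {r | IsNormalOrdering ξ dd r}

/-- The exponent vector `(λ, μ)` as a finitely supported function on `Fin n ⊕ Fin n`. -/
noncomputable def expof {n : ℕ} (lam mu : Fin n → ℕ) : (Fin n ⊕ Fin n) →₀ ℕ :=
  Finsupp.equivFunOnFinite.symm (Sum.elim lam mu)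

/-- The normal monomial of `N` corresponding to an exponent vector `d`. -/
noncomputable def nmD (ξ dd : Fin n → W) (d : (Fin n ⊕ Fin n) →₀ ℕ) :
    ↥(NormalMonomials ξ dd) :=
  nmEl ξ dd (fun i => d (Sum.inl i)) (fun i => d (Sum.inr i))

/-- The ordering on exponent vectors induced by a total ordering `r` on `N`. -/
noncomputable def rD (ξ dd : Fin n → W) (r : TO ↥(NormalMonomials ξ dd))
    (d e : (Fin n ⊕ Fin n) →₀ ℕ) : Prop :=
  r.rel (nmD ξ dd d) (nmD ξ dd e)

/-- `IsLTerm ξ dd Φ r w d` says that the exponent vector `d`, i.e. the normal monomial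
`ξ^λ∂^μ` with `(λ,μ) = d`, is the `r`-greatest element of the support of `w`, that is,
`lt_≼(w) = ξ^λ∂^μ` (equivalently `LT_≼(w) = X^λY^μ`). -/
noncomputable def IsLTerm (ξ dd : Fin n → W)
    (Φ : W ≃ₗ[K] MvPolynomial (Fin n ⊕ Fin n) K) (r : TO ↥(NormalMonomials ξ dd))
    (w : W) (d : (Fin n ⊕ Fin n) →₀ ℕ) : Prop :=
  d ∈ (Φ w).support ∧ ∀ c ∈ (Φ w).support, rD ξ dd r c d

/-- The ideal `LT_≼(L) = ⟨LT_≼(x) : x ∈ L, x ≠ 0⟩` of `K[X,Y]`. -/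
noncomputable def LTIdeal (ξ dd : Fin n → W)
    (Φ : W ≃ₗ[K] MvPolynomial (Fin n ⊕ Fin n) K) (r : TO ↥(NormalMonomials ξ dd))
    (L : Set W) : Ideal (MvPolynomial (Fin n ⊕ Fin n) K) :=
  Ideal.span {p | ∃ x ∈ L, x ≠ 0 ∧ ∃ d, IsLTerm ξ dd Φ r x d ∧ p = monomial d 1}

/-- `B` is a Gröbner basis of the left ideal `L` with respect to `r`: `B` is a finite
subset of `L` with `L = Σ_{b∈B} W·b` and `LT_≼(L) = ⟨LT_≼(b) : b ∈ B, b ≠ 0⟩`. -/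
noncomputable def IsGroebnerBasis (ξ dd : Fin n → W)
    (Φ : W ≃ₗ[K] MvPolynomial (Fin n ⊕ Fin n) K) (r : TO ↥(NormalMonomials ξ dd))
    (L : Submodule W W) (B : Finset W) : Prop :=
  (B : Set W) ⊆ (L : Set W) ∧ Submodule.span W (B : Set W) = L ∧
  LTIdeal ξ dd Φ r (L : Set W) =
    Ideal.span {p | ∃ b ∈ B, b ≠ 0 ∧ ∃ d, IsLTerm ξ dd Φ r b d ∧ p = monomial d 1}

end Weyl


namespace WeylAux
variable {W : Type*} [Ring W]

/-- Product of powers `f 0 ^ l 0 * ... * f (m-1) ^ l (m-1)`. -/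
def pw {m : ℕ} (f : Fin m → W) (l : Fin m → ℕ) : W := (List.ofFn fun i => f i ^ l i).prod

lemma pw_succ {m : ℕ} (f : Fin (m + 1) → W) (l : Fin (m + 1) → ℕ) :
    pw f l = f 0 ^ l 0 * pw (fun i => f i.succ) (fun i => l i.succ) := by
  simp [pw, List.ofFn_succ]

lemma pw_zero {m : ℕ} (f : Fin m → W) : pw f 0 = 1 := by
  induction m with
  | zero => simp [pw]
  | succ m ih =>
    rw [pw_succ]
    have := ih (fun i => f i.succ)
    simp only [Pi.zero_apply, pow_zero, one_mul]
    exact this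

lemma commute_pw {m : ℕ} {a : W} {f : Fin m → W} (h : ∀ i, Commute a (f i)) (l : Fin m → ℕ) :
    Commute a (pw f l) := by
  refine Commute.list_prod_right _ _ ?_
  intro x hx
  obtain ⟨i, rfl⟩ := List.mem_ofFn.mp hx
  exact (h i).pow_right _

lemma pw_add {m : ℕ} {f : Fin m → W} (hc : ∀ i j, Commute (f i) (f j)) (l1 l2 : Fin m → ℕ) :
    pw f (l1 + l2) = pw f l1 * pw f l2 := by
  induction m with
  | zero =>
    have e : ∀ l : Fin 0 → ℕ, pw f l = 1 := fun l => by
      rw [Subsingleton.elim l 0]; exact pw_zero f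
    rw [e, e, e]; simp
  | succ m ih =>
    have hc' : ∀ i j : Fin m, Commute (f i.succ) (f j.succ) :=
      fun i j => hc (Fin.succ i) (Fin.succ j)
    have e1 : (fun i : Fin m => (l1 + l2) i.succ)
        = (fun i => l1 i.succ) + (fun i => l2 i.succ) := rfl
    have hcm : Commute (f 0 ^ l2 0) (pw (fun i => f i.succ) (fun i => l1 i.succ)) :=
      (commute_pw (fun i => hc 0 i.succ) _).pow_left _
    rw [pw_succ, pw_succ f l1, pw_succ f l2, e1, ih hc', Pi.add_apply, pow_add]
    rw [mul_assoc, mul_assoc, ← mul_assoc (f 0 ^ l2 0), hcm.eq, mul_assoc, ← mul_assoc]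

lemma pw_single {m : ℕ} (f : Fin m → W) (i : Fin m) : pw f (Pi.single i 1) = f i := by
  induction m with
  | zero => exact i.elim0
  | succ m ih =>
    rw [pw_succ]
    rcases Fin.eq_zero_or_eq_succ i with h | ⟨j, rfl⟩
    · subst h
      have ht : (fun k : Fin m => (Pi.single (0 : Fin (m + 1)) 1 : Fin (m + 1) → ℕ) k.succ)
          = 0 := funext fun k => Pi.single_eq_of_ne (Fin.succ_ne_zero k) _
      rw [ht, pw_zero, Pi.single_eq_same, pow_one, mul_one]
    · have h0 : (Pi.single j.succ 1 : Fin (m + 1) → ℕ) 0 = 0 :=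
        Pi.single_eq_of_ne (Fin.succ_ne_zero j).symm _
      have ht : (fun k : Fin m => (Pi.single j.succ 1 : Fin (m + 1) → ℕ) k.succ)
          = Pi.single j 1 := by
        funext k
        simp [Pi.single_apply, Fin.succ_inj]
      rw [h0, pow_zero, one_mul, ht, ih]


section Weyl
variable {n : ℕ} {W : Type*} [Ring W]

/-- Commutation of a single `∂ i` past a product of powers of the `ξ`'s. -/
lemma dd_pw (ξ dd : Fin n → W) (hξ : ∀ i j, ξ i * ξ j = ξ j * ξ i)
    (hrel : ∀ i j, dd i * ξ j - ξ j * dd i = if i = j then (1 : W) else 0) :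
    ∀ (N : ℕ) (ρ : Fin n → ℕ), (∑ j, ρ j) ≤ N → ∀ i,
      dd i * pw ξ ρ = pw ξ ρ * dd i + (ρ i) • pw ξ (ρ - Pi.single i 1) := by
  have hc : ∀ i j, Commute (ξ i) (ξ j) := hξ
  intro N
  induction N with
  | zero =>
    intro ρ hρ i
    have h0 : ρ = 0 := funext fun j =>
      Nat.le_zero.mp (le_trans (Finset.single_le_sum (f := ρ) (fun _ _ => Nat.zero_le _)
        (Finset.mem_univ j)) hρ)
    subst h0
    simp [pw_zero]
  | succ N ih =>
    intro ρ hρ i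
    by_cases h0 : ρ = 0
    · subst h0; simp [pw_zero]
    · have hj : ∃ j, 0 < ρ j := by
        by_contra h
        push_neg at h
        exact h0 (funext fun j => Nat.le_zero.mp (h j))
      obtain ⟨j, hjpos⟩ := hj
      set ρ' : Fin n → ℕ := ρ - Pi.single j 1 with hρ'def
      have hρ'app : ∀ j', ρ' j' = ρ j' - (if j' = j then 1 else 0) := by
        intro j'
        simp [hρ'def, Pi.single_apply]
      have hdecomp : ρ = Pi.single j 1 + ρ' := by
        funext j'
        simp only [Pi.add_apply, Pi.single_apply, hρ'app]
        rcases eq_or_ne j' j with h | h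
        · subst h; simp; omega
        · simp [h]
      have hsum : (∑ j', ρ' j') ≤ N := by
        have h1 : (∑ j', ρ j') = 1 + ∑ j', ρ' j' := by
          conv_lhs => rw [hdecomp]
          simp only [Pi.add_apply]
          rw [Finset.sum_add_distrib, Finset.sum_pi_single']
          simp
        omega
      have hpw : pw ξ ρ = ξ j * pw ξ ρ' := by
        conv_lhs => rw [hdecomp]
        rw [pw_add hc, pw_single]
      have hcom : dd i * ξ j = ξ j * dd i + (if i = j then (1 : W) else 0) :=
        sub_eq_iff_eq_add'.mp (hrel i j)
      have ihr := ih ρ' hsum i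
      rw [hpw, ← mul_assoc, hcom, add_mul, mul_assoc, ihr]
      rw [mul_add, ← mul_assoc (ξ j)]
      by_cases hij : i = j
      · subst hij
        rw [if_pos rfl, one_mul]
        have hρi : ρ i = ρ' i + 1 := by
          rw [hρ'app]; simp; omega
        have hρsub : ρ - Pi.single i 1 = ρ' := rfl
        rw [hρsub, hρi, mul_smul_comm]
        by_cases hz : ρ' i = 0
        · rw [hz]
          simp [mul_assoc]
        · have hrw : Pi.single i 1 + (ρ' - Pi.single i 1) = ρ' := by
            funext j'
            simp only [Pi.add_apply, Pi.sub_apply, Pi.single_apply, hρ'app]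
            rcases eq_or_ne j' i with h | h
            · subst h; simp; omega
            · simp [h]
          have hmm : ξ i * pw ξ (ρ' - Pi.single i 1) = pw ξ ρ' := by
            rw [← pw_single ξ i, ← pw_add hc, hrw]
          rw [hmm, succ_nsmul, add_assoc]
      · rw [if_neg hij, zero_mul, add_zero]
        have hρi : ρ i = ρ' i := by
          rw [hρ'app]; simp [hij, Ne.symm hij]
        have hrw : Pi.single j 1 + (ρ' - Pi.single i 1) = ρ - Pi.single i 1 := by
          funext j'
          simp only [Pi.add_apply, Pi.sub_apply, Pi.single_apply, hρ'app]
          rcases eq_or_ne j' j with h1 | h1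
          · have hji : ¬ (j' = i) := fun h => hij (h ▸ h1)
            have hpos' : 0 < ρ j' := by rw [h1]; exact hjpos
            simp only [if_pos h1, if_neg hji]
            omega
          · simp [h1]
        have hmm : ξ j * pw ξ (ρ' - Pi.single i 1) = pw ξ (ρ - Pi.single i 1) := by
          rw [← pw_single ξ j, ← pw_add hc, hrw]
        rw [mul_smul_comm, hmm, hρi, mul_assoc]


variable (K : Type*) [Field K] [Algebra K W]

lemma comm_span (ξ dd : Fin n → W) (hξ : ∀ i j, ξ i * ξ j = ξ j * ξ i)
    (hdd : ∀ i j, dd i * dd j = dd j * dd i)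
    (hrel : ∀ i j, dd i * ξ j - ξ j * dd i = if i = j then (1 : W) else 0) :
    ∀ (N : ℕ) (μ ρ : Fin n → ℕ), (∑ j, μ j) ≤ N →
      pw dd μ * pw ξ ρ - pw ξ ρ * pw dd μ ∈
        Submodule.span K {w : W | ∃ l m : Fin n → ℕ,
          l ≤ ρ ∧ m ≤ μ ∧ ¬(l = ρ ∧ m = μ) ∧ w = pw ξ l * pw dd m} := by
  have hddc : ∀ i j, Commute (dd i) (dd j) := hdd
  intro N
  induction N with
  | zero =>
    intro μ ρ hμ
    have h0 : μ = 0 := funext fun j =>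
      Nat.le_zero.mp (le_trans (Finset.single_le_sum (f := μ) (fun _ _ => Nat.zero_le _)
        (Finset.mem_univ j)) hμ)
    subst h0
    simp [pw_zero]
  | succ N ih =>
    intro μ ρ hμ
    by_cases h0 : μ = 0
    · subst h0; simp [pw_zero]
    · have hj : ∃ j, 0 < μ j := by
        by_contra h
        push_neg at h
        exact h0 (funext fun j => Nat.le_zero.mp (h j))
      obtain ⟨j, hjpos⟩ := hj
      obtain ⟨μ', hμ'app⟩ : ∃ μ' : Fin n → ℕ, ∀ t, μ' t = μ t - (if t = j then 1 else 0) :=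
        ⟨_, fun _ => rfl⟩
      have hB : μ' j + 1 = μ j := by
        have h2 := hμ'app j
        rw [if_pos rfl] at h2
        omega
      have hA : ∀ t, t ≠ j → μ' t = μ t := by
        intro t ht
        rw [hμ'app, if_neg ht]
        omega
      have hs1 : (Pi.single j 1 : Fin n → ℕ) j = 1 := Pi.single_eq_same j 1
      have hs2 : ∀ t, t ≠ j → (Pi.single j 1 : Fin n → ℕ) t = 0 :=
        fun t ht => Pi.single_eq_of_ne ht 1
      have hdecomp : μ = Pi.single j 1 + μ' := by
        funext t
        simp only [Pi.add_apply]
        rcases eq_or_ne t j with rfl | h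
        · rw [hs1]; omega
        · rw [hs2 t h, hA t h]; omega
      have hsum : (∑ t, μ' t) ≤ N := by
        have h1 : (∑ t, μ t) = 1 + ∑ t, μ' t := by
          conv_lhs => rw [hdecomp]
          simp only [Pi.add_apply]
          rw [Finset.sum_add_distrib, Finset.sum_pi_single']
          simp
        omega
      have hdj : pw dd μ = dd j * pw dd μ' := by
        conv_lhs => rw [hdecomp]
        rw [pw_add hddc, pw_single]
      set z : W := pw dd μ' * pw ξ ρ - pw ξ ρ * pw dd μ' with hzdef
      have hz := ih μ' ρ hsum
      have hddpw := dd_pw ξ dd hξ hrel (∑ t, ρ t) ρ le_rfl j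
      have h1 : pw dd μ' * pw ξ ρ = pw ξ ρ * pw dd μ' + z := by rw [hzdef]; abel
      have key : pw dd μ * pw ξ ρ - pw ξ ρ * pw dd μ
          = dd j * z + (ρ j) • (pw ξ (ρ - Pi.single j 1) * pw dd μ') := by
        rw [hdj, mul_assoc, h1, mul_add, ← mul_assoc (dd j) (pw ξ ρ), hddpw, add_mul,
          smul_mul_assoc, mul_assoc]
        abel
      rw [key]
      refine Submodule.add_mem _ ?_ ?_
      · -- dd j * z ∈ span
        have hmulmem : ∀ (x : W), x ∈ Submodule.span K {w : W | ∃ l m : Fin n → ℕ,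
              l ≤ ρ ∧ m ≤ μ' ∧ ¬(l = ρ ∧ m = μ') ∧ w = pw ξ l * pw dd m} →
            dd j * x ∈ Submodule.span K {w : W | ∃ l m : Fin n → ℕ,
              l ≤ ρ ∧ m ≤ μ ∧ ¬(l = ρ ∧ m = μ) ∧ w = pw ξ l * pw dd m} := by
          intro x hx
          refine Submodule.span_induction ?_ ?_ ?_ ?_ hx
          · rintro w ⟨l, m, hl, hm, hne, rfl⟩
            have hm' := Pi.le_def.mp hm
            have hl' := Pi.le_def.mp hl
            have hddm : dd j * pw dd m = pw dd (Pi.single j 1 + m) := by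
              rw [pw_add hddc, pw_single]
            have hlj := dd_pw ξ dd hξ hrel (∑ t, l t) l le_rfl j
            have hexp : dd j * (pw ξ l * pw dd m)
                = pw ξ l * pw dd (Pi.single j 1 + m)
                  + (l j) • (pw ξ (l - Pi.single j 1) * pw dd m) := by
              calc dd j * (pw ξ l * pw dd m) = (dd j * pw ξ l) * pw dd m := by rw [mul_assoc]
                _ = (pw ξ l * dd j + (l j) • pw ξ (l - Pi.single j 1)) * pw dd m := by rw [hlj]
                _ = pw ξ l * (dd j * pw dd m) + (l j) • (pw ξ (l - Pi.single j 1) * pw dd m) := by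
                    rw [add_mul, smul_mul_assoc, mul_assoc]
                _ = _ := by rw [hddm]
            rw [hexp]
            refine Submodule.add_mem _ (Submodule.subset_span ?_)
              (nsmul_mem (Submodule.subset_span ?_) _)
            · refine ⟨l, Pi.single j 1 + m, hl, ?_, ?_, rfl⟩
              · refine Pi.le_def.mpr fun t => ?_
                have h2 := hm' t
                simp only [Pi.add_apply]
                rcases eq_or_ne t j with rfl | h
                · rw [hs1]; omega
                · rw [hs2 t h]
                  have := hA t h
                  omega
              · rintro ⟨hlρ, hmm⟩
                refine hne ⟨hlρ, funext fun t => ?_⟩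
                have h2 := congrFun hmm t
                simp only [Pi.add_apply] at h2
                rcases eq_or_ne t j with rfl | h
                · rw [hs1] at h2; omega
                · rw [hs2 t h] at h2
                  have := hA t h
                  omega
            · refine ⟨l - Pi.single j 1, m, ?_, ?_, ?_, rfl⟩
              · refine Pi.le_def.mpr fun t => ?_
                have h2 := hl' t
                simp only [Pi.sub_apply]
                omega
              · refine Pi.le_def.mpr fun t => ?_
                have h2 := hm' t
                rcases eq_or_ne t j with rfl | h
                · omega
                · have := hA t h
                  omega
              · rintro ⟨-, hmm⟩
                have h2 := hm' j
                have h4 := congrFun hmm j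
                omega
          · simp
          · intro x y _ _ hx hy
            rw [mul_add]
            exact Submodule.add_mem _ hx hy
          · intro a x _ hx
            rw [mul_smul_comm]
            exact Submodule.smul_mem _ _ hx
        exact hmulmem z hz
      · refine nsmul_mem (Submodule.subset_span ?_) _
        refine ⟨ρ - Pi.single j 1, μ', ?_, ?_, ?_, rfl⟩
        · refine Pi.le_def.mpr fun t => ?_
          simp only [Pi.sub_apply]
          omega
        · refine Pi.le_def.mpr fun t => ?_
          rcases eq_or_ne t j with rfl | h
          · omega
          · have := hA t h
            omega
        · rintro ⟨-, hmm⟩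
          have h4 := congrFun hmm j
          omega


/-- The normal monomial of `W` attached to an exponent vector. -/
def EW (ξ dd : Fin n → W) (c : (Fin n ⊕ Fin n) →₀ ℕ) : W :=
  pw ξ (fun i => c (Sum.inl i)) * pw dd (fun i => c (Sum.inr i))

lemma EW_mul (ξ dd : Fin n → W) (hξ : ∀ i j, ξ i * ξ j = ξ j * ξ i)
    (hdd : ∀ i j, dd i * dd j = dd j * dd i)
    (hrel : ∀ i j, dd i * ξ j - ξ j * dd i = if i = j then (1 : W) else 0)
    (a b : (Fin n ⊕ Fin n) →₀ ℕ) :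
    EW ξ dd a * EW ξ dd b - EW ξ dd (a + b) ∈
      Submodule.span K {w : W | ∃ c, c ≤ a + b ∧ c ≠ a + b ∧ w = EW ξ dd c} := by
  have hc : ∀ i j, Commute (ξ i) (ξ j) := hξ
  have hdc : ∀ i j, Commute (dd i) (dd j) := hdd
  set xa : Fin n → ℕ := fun i => a (Sum.inl i) with hxa
  set da : Fin n → ℕ := fun i => a (Sum.inr i) with hda
  set xb : Fin n → ℕ := fun i => b (Sum.inl i) with hxb
  set db : Fin n → ℕ := fun i => b (Sum.inr i) with hdb
  have hEab : EW ξ dd (a + b) = pw ξ xa * pw ξ xb * (pw dd da * pw dd db) := by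
    have h1 : (fun i => (a + b) (Sum.inl i)) = xa + xb := by
      funext i; simp [hxa, hxb]
    have h2 : (fun i => (a + b) (Sum.inr i)) = da + db := by
      funext i; simp [hda, hdb]
    rw [EW, h1, h2, pw_add hc, pw_add hdc]
  have hdiff : EW ξ dd a * EW ξ dd b - EW ξ dd (a + b)
      = pw ξ xa * (pw dd da * pw ξ xb - pw ξ xb * pw dd da) * pw dd db := by
    rw [hEab, EW, EW, mul_sub, sub_mul, mul_assoc, mul_assoc, mul_assoc, mul_assoc, mul_assoc]
    congr 2
    rw [← mul_assoc]
  rw [hdiff]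
  have hz := comm_span K ξ dd hξ hdd hrel (∑ t, da t) da xb le_rfl
  have hmap : ∀ (x : W), x ∈ Submodule.span K {w : W | ∃ l m : Fin n → ℕ,
        l ≤ xb ∧ m ≤ da ∧ ¬(l = xb ∧ m = da) ∧ w = pw ξ l * pw dd m} →
      pw ξ xa * x * pw dd db ∈
        Submodule.span K {w : W | ∃ c, c ≤ a + b ∧ c ≠ a + b ∧ w = EW ξ dd c} := by
    intro x hx
    refine Submodule.span_induction ?_ ?_ ?_ ?_ hx
    · rintro w ⟨l, m, hl, hm, hne, rfl⟩
      have hl' := Pi.le_def.mp hl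
      have hm' := Pi.le_def.mp hm
      set c : (Fin n ⊕ Fin n) →₀ ℕ :=
        Finsupp.equivFunOnFinite.symm (Sum.elim (xa + l) (m + db)) with hcdef
      have hcl : ∀ i, c (Sum.inl i) = xa i + l i := fun i => rfl
      have hcr : ∀ i, c (Sum.inr i) = m i + db i := fun i => rfl
      have hcle : c ≤ a + b := by
        rw [Finsupp.le_def]
        intro s
        rcases s with i | i
        · rw [hcl i]
          have h5 := hl' i
          simp only [hxb] at h5
          simp [hxa]
          omega
        · rw [hcr i]
          have h5 := hm' i
          simp only [hda] at h5
          simp [hdb]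
          omega
      have hcne : c ≠ a + b := by
        intro hcontr
        apply hne
        constructor
        · funext i
          have h6 := DFunLike.congr_fun hcontr (Sum.inl i)
          rw [hcl i] at h6
          simp only [Finsupp.add_apply] at h6
          simp only [hxa] at h6
          simp only [hxb]
          omega
        · funext i
          have h6 := DFunLike.congr_fun hcontr (Sum.inr i)
          rw [hcr i] at h6
          simp only [Finsupp.add_apply] at h6
          simp only [hdb] at h6
          simp only [hda]
          omega
      have hEc : EW ξ dd c = pw ξ xa * (pw ξ l * pw dd m) * pw dd db := by
        have h1 : (fun i => c (Sum.inl i)) = xa + l := funext fun i => hcl i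
        have h2 : (fun i => c (Sum.inr i)) = m + db := funext fun i => hcr i
        rw [EW, h1, h2, pw_add hc, pw_add hdc, mul_assoc, mul_assoc, mul_assoc]
      exact Submodule.subset_span ⟨c, hcle, hcne, by rw [hEc]⟩
    · simp
    · intro x y _ _ hx hy
      rw [mul_add, add_mul]
      exact Submodule.add_mem _ hx hy
    · intro k x _ hx
      rw [mul_smul_comm, smul_mul_assoc]
      exact Submodule.smul_mem _ _ hx
  exact hmap _ hz

end Weyl

end WeylAux


/-- every left ideal `L` of `W` admits a Gröbner basis with respect to any
normal ordering `≼` of `W`. -/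
theorem exists_groebnerBasis
    {K : Type*} [Field K] [CharZero K] {n : ℕ} (hn : 1 ≤ n)
    {W : Type*} [Ring W] [Algebra K W] (ξ dd : Fin n → W)
    (hξcomm : ∀ i j, ξ i * ξ j = ξ j * ξ i)
    (hddcomm : ∀ i j, dd i * dd j = dd j * dd i)
    (hrel : ∀ i j, dd i * ξ j - ξ j * dd i = if i = j then (1 : W) else 0)
    (Φ : W ≃ₗ[K] MvPolynomial (Fin n ⊕ Fin n) K)
    (hΦ : ∀ lam mu, Φ (nm ξ dd lam mu) = MvPolynomial.monomial (expof lam mu) 1)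
    (r : TO ↥(NormalMonomials ξ dd)) (hr : IsNormalOrdering ξ dd r)
    (L : Submodule W W) :
    ∃ B : Finset W, IsGroebnerBasis ξ dd Φ r L B := by
  classical
  -- basic bridges
  have hΦE : ∀ c : ((Fin n ⊕ Fin n) →₀ ℕ), Φ (WeylAux.EW ξ dd c) = MvPolynomial.monomial c (1 : K) := by
    intro c
    have h1 : WeylAux.EW ξ dd c = nm ξ dd (fun i => c (Sum.inl i)) (fun i => c (Sum.inr i)) := rfl
    rw [h1, hΦ]
    have h2 : expof (fun i => c (Sum.inl i)) (fun i => c (Sum.inr i)) = c := by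
      ext s
      cases s <;> simp [expof]
    rw [h2]
  -- order facts
  have htotal : ∀ a b : ((Fin n ⊕ Fin n) →₀ ℕ), rD ξ dd r a b ∨ rD ξ dd r b a := fun a b => r.2.2.2 _ _
  have htrans : ∀ a b c : ((Fin n ⊕ Fin n) →₀ ℕ), rD ξ dd r a b → rD ξ dd r b c → rD ξ dd r a c :=
    fun a b c => r.2.2.1 _ _ _
  have hrefl : ∀ a : ((Fin n ⊕ Fin n) →₀ ℕ), rD ξ dd r a a := fun a => (htotal a a).elim id id
  have hanti : ∀ a b : ((Fin n ⊕ Fin n) →₀ ℕ), rD ξ dd r a b → rD ξ dd r b a → a = b := by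
    intro a b h1 h2
    have h3 := r.2.1 _ _ h1 h2
    have h4 : WeylAux.EW ξ dd a = WeylAux.EW ξ dd b :=
      congrArg (fun z : ↥(NormalMonomials ξ dd) => (z : W)) h3
    have h5 := congrArg Φ h4
    rw [hΦE, hΦE] at h5
    exact MvPolynomial.monomial_left_injective one_ne_zero h5
  have hcmp : ∀ a b t : ((Fin n ⊕ Fin n) →₀ ℕ), rD ξ dd r a b → rD ξ dd r (a + t) (b + t) := by
    intro a b t hab
    have e1 : ∀ c t' : ((Fin n ⊕ Fin n) →₀ ℕ), nmEl ξ dd ((fun i => c (Sum.inl i)) + fun i => t' (Sum.inl i))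
        ((fun i => c (Sum.inr i)) + fun i => t' (Sum.inr i)) = nmD ξ dd (c + t') := by
      intro c t'
      unfold nmD nmEl
      congr 1 <;> funext i <;> simp
    have h := hr.2 (fun i => a (Sum.inl i)) (fun i => a (Sum.inr i)) (fun i => b (Sum.inl i))
      (fun i => b (Sum.inr i)) (fun i => t (Sum.inl i)) (fun i => t (Sum.inr i)) hab
    rw [e1 a t, e1 b t] at h
    exact h
  have hle_rD : ∀ a b : ((Fin n ⊕ Fin n) →₀ ℕ), a ≤ b → rD ξ dd r a b := by
    intro a b hab
    have h00 : nmD ξ dd (0 : ((Fin n ⊕ Fin n) →₀ ℕ)) = nmEl ξ dd 0 0 := by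
      unfold nmD nmEl
      congr 1 <;> funext i <;> simp
    have h0t : rD ξ dd r 0 (b - a) := by
      show r.rel (nmD ξ dd 0) (nmD ξ dd (b - a))
      rw [h00]
      exact hr.1 _ _
    have h := hcmp 0 (b - a) a h0t
    rw [zero_add] at h
    rwa [tsub_add_cancel_of_le hab] at h
  -- well-foundedness of the strict order
  have hwf : WellFounded (fun c d : ((Fin n ⊕ Fin n) →₀ ℕ) => rD ξ dd r c d ∧ c ≠ d) := by
    haveI hti : IsTrans ((Fin n ⊕ Fin n) →₀ ℕ) (fun c d => rD ξ dd r c d ∧ c ≠ d) := by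
      constructor
      rintro a b c ⟨h1, h2⟩ ⟨h3, h4⟩
      refine ⟨htrans _ _ _ h1 h3, fun h5 => ?_⟩
      exact h2 (hanti a b h1 (h5 ▸ h3))
    haveI hir : IsIrrefl ((Fin n ⊕ Fin n) →₀ ℕ) (fun c d => rD ξ dd r c d ∧ c ≠ d) :=
      ⟨fun a h => h.2 rfl⟩
    haveI : IsStrictOrder ((Fin n ⊕ Fin n) →₀ ℕ) (fun c d => rD ξ dd r c d ∧ c ≠ d) := {}
    rw [RelEmbedding.wellFounded_iff_isEmpty]
    refine ⟨fun f => ?_⟩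
    obtain ⟨i, j, hij, hle⟩ := (Set.isPWO_of_wellQuasiOrderedLE (Set.univ : Set ((Fin n ⊕ Fin n) →₀ ℕ))).exists_lt (f := fun k => f k)
      (fun k => Set.mem_univ _)
    have h1 : rD ξ dd r (f j) (f i) ∧ f j ≠ f i := f.map_rel_iff.mpr hij
    exact h1.2 (hanti _ _ h1.1 (hle_rD _ _ hle))
  -- maximum of a finite set
  have hmax : ∀ s : Finset ((Fin n ⊕ Fin n) →₀ ℕ), s.Nonempty → ∃ d ∈ s, ∀ c ∈ s, rD ξ dd r c d := by
    intro s
    induction s using Finset.induction_on with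
    | empty => intro h; exact absurd h (by simp)
    | @insert a t ha ih =>
      intro _
      rcases t.eq_empty_or_nonempty with rfl | ht
      · refine ⟨a, by simp, ?_⟩
        intro c hc
        rcases Finset.mem_insert.mp hc with rfl | hc
        · exact hrefl c
        · exact absurd hc (by simp)
      · obtain ⟨d, hd, hdmax⟩ := ih ht
        rcases htotal a d with h | h
        · refine ⟨d, Finset.mem_insert_of_mem hd, ?_⟩
          intro c hc
          rcases Finset.mem_insert.mp hc with rfl | hc
          · exact h
          · exact hdmax c hc
        · refine ⟨a, Finset.mem_insert_self _ _, ?_⟩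
          intro c hc
          rcases Finset.mem_insert.mp hc with rfl | hc
          · exact hrefl c
          · exact htrans _ _ _ (hdmax c hc) h
  -- decomposition of an element into normal monomials
  have hxsum : ∀ x : W, x = ∑ b ∈ (Φ x).support,
      (MvPolynomial.coeff b (Φ x)) • WeylAux.EW ξ dd b := by
    intro x
    apply Φ.injective
    rw [map_sum]
    conv_lhs => rw [← MvPolynomial.support_sum_monomial_coeff (Φ x)]
    refine Finset.sum_congr rfl fun b hb => ?_
    rw [map_smul, hΦE, MvPolynomial.smul_monomial, smul_eq_mul, mul_one]
  -- support of elements of "lower" spans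
  have hzsupp : ∀ s : ((Fin n ⊕ Fin n) →₀ ℕ), ∀ z : W,
      z ∈ Submodule.span K {w : W | ∃ c, c ≤ s ∧ c ≠ s ∧ w = WeylAux.EW ξ dd c} →
      ∀ c ∈ (Φ z).support, c ≤ s ∧ c ≠ s := by
    intro s z hz
    refine Submodule.span_induction ?_ ?_ ?_ ?_ hz
    · rintro w ⟨c, hc1, hc2, rfl⟩ c' hc'
      rw [hΦE] at hc'
      by_cases h : c = c'
      · exact h ▸ ⟨hc1, hc2⟩
      · exfalso
        apply MvPolynomial.mem_support_iff.mp hc'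
        rw [MvPolynomial.coeff_monomial, if_neg h]
    · intro c hc
      rw [map_zero] at hc
      simp at hc
    · intro x y _ _ ihx ihy c hc
      rw [map_add] at hc
      rcases Finset.mem_union.mp (MvPolynomial.support_add hc) with h | h
      · exact ihx c h
      · exact ihy c h
    · intro k x _ ihx c hc
      rw [map_smul] at hc
      exact ihx c (MvPolynomial.support_smul hc)
  -- key lemma : leading behaviour of (normal monomial) * x
  have hkey : ∀ (x : W) (d₀ : ((Fin n ⊕ Fin n) →₀ ℕ)), IsLTerm ξ dd Φ r x d₀ → ∀ e : ((Fin n ⊕ Fin n) →₀ ℕ),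
      MvPolynomial.coeff (e + d₀) (Φ (WeylAux.EW ξ dd e * x)) = MvPolynomial.coeff d₀ (Φ x) ∧
      ∀ c ∈ (Φ (WeylAux.EW ξ dd e * x)).support, rD ξ dd r c (e + d₀) := by
    intro x d₀ hlt e
    obtain ⟨hd₀supp, hd₀max⟩ := hlt
    set z : ((Fin n ⊕ Fin n) →₀ ℕ) → W := fun b =>
      WeylAux.EW ξ dd e * WeylAux.EW ξ dd b - WeylAux.EW ξ dd (e + b) with hzdef
    have hzb : ∀ b : ((Fin n ⊕ Fin n) →₀ ℕ), ∀ c ∈ (Φ (z b)).support, c ≤ e + b ∧ c ≠ e + b := by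
      intro b
      exact hzsupp (e + b) (z b)
        (WeylAux.EW_mul K ξ dd hξcomm hddcomm hrel e b)
    have hprod : WeylAux.EW ξ dd e * x = ∑ b ∈ (Φ x).support,
        (MvPolynomial.coeff b (Φ x)) • (WeylAux.EW ξ dd (e + b) + z b) := by
      conv_lhs => rw [hxsum x]
      rw [Finset.mul_sum]
      refine Finset.sum_congr rfl fun b hb => ?_
      rw [mul_smul_comm]
      congr 1
      rw [hzdef]
      exact (add_sub_cancel (WeylAux.EW ξ dd (e + b))
        (WeylAux.EW ξ dd e * WeylAux.EW ξ dd b)).symm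
    have hΦprod : Φ (WeylAux.EW ξ dd e * x) = ∑ b ∈ (Φ x).support,
        (MvPolynomial.coeff b (Φ x)) •
          (MvPolynomial.monomial (e + b) (1 : K) + Φ (z b)) := by
      rw [hprod, map_sum]
      refine Finset.sum_congr rfl fun b hb => ?_
      rw [map_smul, map_add, hΦE]
    have hinj : ∀ b : ((Fin n ⊕ Fin n) →₀ ℕ), e + b = e + d₀ → b = d₀ := by
      intro b hb
      ext s
      have := DFunLike.congr_fun hb s
      simp only [Finsupp.add_apply] at this
      omega
    constructor
    · rw [hΦprod, MvPolynomial.coeff_sum]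
      rw [Finset.sum_eq_single d₀]
      · rw [MvPolynomial.coeff_smul, MvPolynomial.coeff_add, MvPolynomial.coeff_monomial,
          if_pos rfl]
        have hz0 : MvPolynomial.coeff (e + d₀) (Φ (z d₀)) = 0 := by
          by_contra h
          exact (hzb d₀ _ (MvPolynomial.mem_support_iff.mpr h)).2 rfl
        rw [hz0, add_zero, smul_eq_mul, mul_one]
      · intro b hb hbne
        have hmono : MvPolynomial.coeff (e + d₀)
            (MvPolynomial.monomial (e + b) (1 : K)) = 0 := by
          rw [MvPolynomial.coeff_monomial, if_neg (fun h => hbne (hinj b h))]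
        have hzc : MvPolynomial.coeff (e + d₀) (Φ (z b)) = 0 := by
          by_contra h
          have h2 := hzb b _ (MvPolynomial.mem_support_iff.mpr h)
          have h3 : d₀ ≤ b := by
            rw [Finsupp.le_def]
            intro s
            have h4 := Finsupp.le_def.mp h2.1 s
            simp only [Finsupp.add_apply] at h4
            omega
          have h5 : d₀ ≠ b := fun h6 => h2.2 (by rw [h6])
          exact h5 (hanti d₀ b (hle_rD _ _ h3) (hd₀max b hb))
        rw [MvPolynomial.coeff_smul, MvPolynomial.coeff_add, hmono, hzc, add_zero, smul_zero]
      · intro h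
        exact absurd hd₀supp h
    · intro c hc
      rw [hΦprod] at hc
      obtain ⟨b, hb, hcb⟩ := Finset.mem_biUnion.mp (MvPolynomial.support_sum hc)
      have hcb2 := MvPolynomial.support_smul hcb
      have hrDb : rD ξ dd r (e + b) (e + d₀) := by
        have h := hcmp b d₀ e (hd₀max b hb)
        rwa [add_comm b e, add_comm d₀ e] at h
      rcases Finset.mem_union.mp (MvPolynomial.support_add hcb2) with h | h
      · have hc2 : c = e + b := by
          by_contra hne
          apply MvPolynomial.mem_support_iff.mp h
          rw [MvPolynomial.coeff_monomial, if_neg (fun h2 => hne h2.symm)]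
        rw [hc2]
        exact hrDb
      · have h2 := hzb b c h
        exact htrans _ _ _ (hle_rD _ _ h2.1) hrDb
  -- Noetherian argument : finite generating set of monomials
  have hfg : (LTIdeal ξ dd Φ r (L : Set W)).FG := IsNoetherian.noetherian _
  obtain ⟨G, hG⟩ := hfg
  have hGel : ∀ g ∈ G, ∃ t : Finset (MvPolynomial (Fin n ⊕ Fin n) K),
      ↑t ⊆ {p : MvPolynomial (Fin n ⊕ Fin n) K | ∃ x ∈ (L : Set W), x ≠ 0 ∧
        ∃ d, IsLTerm ξ dd Φ r x d ∧ p = MvPolynomial.monomial d 1} ∧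
      g ∈ Ideal.span (↑t : Set (MvPolynomial (Fin n ⊕ Fin n) K)) := by
    intro g hg
    have h1 : g ∈ LTIdeal ξ dd Φ r (L : Set W) := by
      rw [← hG]
      exact Ideal.subset_span hg
    exact Submodule.mem_span_finite_of_mem_span h1
  choose! t ht1 ht2 using hGel
  set T : Finset (MvPolynomial (Fin n ⊕ Fin n) K) := G.biUnion t with hTdef
  have hTsub : (↑T : Set (MvPolynomial (Fin n ⊕ Fin n) K)) ⊆
      {p : MvPolynomial (Fin n ⊕ Fin n) K | ∃ x ∈ (L : Set W), x ≠ 0 ∧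
        ∃ d, IsLTerm ξ dd Φ r x d ∧ p = MvPolynomial.monomial d 1} := by
    intro p hp
    obtain ⟨g, hg, hpg⟩ := Finset.mem_biUnion.mp hp
    exact ht1 g hg hpg
  have hspanT : Ideal.span (↑T : Set (MvPolynomial (Fin n ⊕ Fin n) K))
      = LTIdeal ξ dd Φ r (L : Set W) := by
    refine le_antisymm ?_ ?_
    · rw [LTIdeal]
      exact Ideal.span_le.mpr fun p hp => Ideal.subset_span (hTsub hp)
    · rw [← hG]
      refine Ideal.span_le.mpr fun g hg => ?_
      exact Ideal.span_mono (Finset.coe_subset.mpr (Finset.subset_biUnion_of_mem t hg))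
        (ht2 g hg)
  have hTel : ∀ p ∈ T, ∃ x : W, x ∈ (L : Set W) ∧ x ≠ 0 ∧
      ∃ d, IsLTerm ξ dd Φ r x d ∧ p = MvPolynomial.monomial d 1 := by
    intro p hp
    obtain ⟨x, hx1, hx2, hx3⟩ := hTsub hp
    exact ⟨x, hx1, hx2, hx3⟩
  choose! xfun hxmem hxne dfun hxlt hxeq using hTel
  set B : Finset W := T.image xfun with hBdef
  have hBsubL : (↑B : Set W) ⊆ (L : Set W) := by
    intro b hb
    obtain ⟨p, hp, rfl⟩ := Finset.mem_image.mp hb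
    exact hxmem p hp
  -- T as a set of monomials
  have hTsubmono : (↑T : Set (MvPolynomial (Fin n ⊕ Fin n) K)) ⊆
      (fun s => MvPolynomial.monomial s (1 : K)) '' (dfun '' (↑T : Set _)) := by
    intro p hp
    exact ⟨dfun p, ⟨p, hp, rfl⟩, (hxeq p hp).symm⟩
  -- the division argument
  have main : ∀ d : ((Fin n ⊕ Fin n) →₀ ℕ), ∀ w, w ∈ L → w ≠ 0 → IsLTerm ξ dd Φ r w d →
      w ∈ Submodule.span W (↑B : Set W) := by
    intro d
    refine hwf.induction
      (C := fun d => ∀ w, w ∈ L → w ≠ 0 → IsLTerm ξ dd Φ r w d →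
        w ∈ Submodule.span W (↑B : Set W)) d ?_
    intro d ih w hwL hw0 hwlt
    have hmon : MvPolynomial.monomial d (1 : K) ∈ LTIdeal ξ dd Φ r (L : Set W) :=
      Ideal.subset_span ⟨w, hwL, hw0, d, hwlt, rfl⟩
    rw [← hspanT] at hmon
    have hmon2 : MvPolynomial.monomial d (1 : K) ∈
        Ideal.span ((fun s => MvPolynomial.monomial s (1 : K)) '' (dfun '' (↑T : Set _))) :=
      Ideal.span_mono hTsubmono hmon
    have hdmem : d ∈ (MvPolynomial.monomial d (1 : K)).support := by
      rw [MvPolynomial.mem_support_iff, MvPolynomial.coeff_monomial, if_pos rfl]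
      exact one_ne_zero
    obtain ⟨s, hsDS, hsle⟩ := MvPolynomial.mem_ideal_span_monomial_image.mp hmon2 d hdmem
    obtain ⟨p, hpT, rfl⟩ := hsDS
    set x : W := xfun p with hxdef
    have hxB : x ∈ (↑B : Set W) := Finset.mem_coe.mpr (Finset.mem_image_of_mem xfun hpT)
    have hxL : x ∈ L := hxmem p hpT
    have hxlt' : IsLTerm ξ dd Φ r x (dfun p) := hxlt p hpT
    set e : ((Fin n ⊕ Fin n) →₀ ℕ) := d - dfun p with hedef
    have hed : e + dfun p = d := tsub_add_cancel_of_le hsle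
    set y : W := WeylAux.EW ξ dd e * x with hydef
    obtain ⟨hyc, hysupp⟩ := hkey x (dfun p) hxlt' e
    set c0 : K := MvPolynomial.coeff (dfun p) (Φ x) with hc0def
    have hc0 : c0 ≠ 0 := MvPolynomial.mem_support_iff.mp hxlt'.1
    set k : K := MvPolynomial.coeff d (Φ w) * c0⁻¹ with hkdef
    set w' : W := w - k • y with hw'def
    have hyL : k • y ∈ L := by
      have h1 : k • y = (k • WeylAux.EW ξ dd e) • x := by
        rw [smul_eq_mul (α := W), smul_mul_assoc, hydef]
      rw [h1]
      exact Submodule.smul_mem L _ hxL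
    have hyB : k • y ∈ Submodule.span W (↑B : Set W) := by
      have h1 : k • y = (k • WeylAux.EW ξ dd e) • x := by
        rw [smul_eq_mul (α := W), smul_mul_assoc, hydef]
      rw [h1]
      exact Submodule.smul_mem _ _ (Submodule.subset_span hxB)
    have hw'L : w' ∈ L := Submodule.sub_mem L hwL hyL
    have hycd : MvPolynomial.coeff d (Φ y) = c0 := by
      rw [← hed]
      exact hyc
    have hcoeffd : MvPolynomial.coeff d (Φ w') = 0 := by
      rw [hw'def, map_sub, map_smul, MvPolynomial.coeff_sub, MvPolynomial.coeff_smul,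
        hycd, smul_eq_mul, hkdef, mul_assoc, inv_mul_cancel₀ hc0, mul_one, sub_self]
    by_cases hw' : w' = 0
    · have : w = k • y := by
        have h2 := sub_eq_zero.mp (hw'def ▸ hw')
        exact h2
      rw [this]
      exact hyB
    · have hsupp' : ∀ c ∈ (Φ w').support, rD ξ dd r c d ∧ c ≠ d := by
        intro c hc
        have hcne : c ≠ d := by
          intro h
          apply MvPolynomial.mem_support_iff.mp hc
          rw [h, hcoeffd]
        refine ⟨?_, hcne⟩
        have hcw' : MvPolynomial.coeff c (Φ w') ≠ 0 := MvPolynomial.mem_support_iff.mp hc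
        have hcases : MvPolynomial.coeff c (Φ w) ≠ 0 ∨ MvPolynomial.coeff c (Φ y) ≠ 0 := by
          by_contra h
          push_neg at h
          apply hcw'
          rw [hw'def, map_sub, map_smul, MvPolynomial.coeff_sub, MvPolynomial.coeff_smul,
            h.1, h.2, smul_zero, sub_zero]
        rcases hcases with h | h
        · exact hwlt.2 c (MvPolynomial.mem_support_iff.mpr h)
        · have h2 := hysupp c (MvPolynomial.mem_support_iff.mpr h)
          rwa [hed] at h2
      have hΦw' : Φ w' ≠ 0 := by
        intro h
        apply hw'
        have := Φ.injective (by rw [h, map_zero] : Φ w' = Φ 0)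
        exact this
      have hne : (Φ w').support.Nonempty := by
        rw [Finset.nonempty_iff_ne_empty]
        intro h
        exact hΦw' (MvPolynomial.support_eq_empty.mp h)
      obtain ⟨d', hd'mem, hd'max⟩ := hmax _ hne
      have hd'lt : rD ξ dd r d' d ∧ d' ≠ d := hsupp' d' hd'mem
      have hw'span := ih d' hd'lt w' hw'L hw' ⟨hd'mem, hd'max⟩
      have : w = w' + k • y := by
        rw [hw'def]
        abel
      rw [this]
      exact Submodule.add_mem _ hw'span hyB
  -- conclusion
  refine ⟨B, hBsubL, ?_, ?_⟩
  · refine le_antisymm (Submodule.span_le.mpr hBsubL) ?_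
    intro w hw
    by_cases h0 : w = 0
    · rw [h0]
      exact Submodule.zero_mem _
    · have hΦne : Φ w ≠ 0 := by
        intro h
        exact h0 (Φ.injective (by rw [h, map_zero] : Φ w = Φ 0))
      have hne : (Φ w).support.Nonempty := by
        rw [Finset.nonempty_iff_ne_empty]
        intro h
        exact hΦne (MvPolynomial.support_eq_empty.mp h)
      obtain ⟨d, hd, hdm⟩ := hmax _ hne
      exact main d w hw h0 ⟨hd, hdm⟩
  · rw [← hspanT]
    refine le_antisymm ?_ ?_
    · refine Ideal.span_le.mpr fun p hp => ?_
      exact Ideal.subset_span ⟨xfun p, Finset.mem_image_of_mem xfun hp, hxne p hp,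
        dfun p, hxlt p hp, hxeq p hp⟩
    · refine Ideal.span_le.mpr ?_
      rintro q ⟨b, hbB, hbne, dq, hblt, rfl⟩
      have hbL : b ∈ (L : Set W) := hBsubL hbB
      rw [hspanT]
      exact Ideal.subset_span ⟨b, hbL, hbne, dq, hblt, rfl⟩
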